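/- In the autonomy-aware clustering setup with squared Euclidean cost and autonomy independent of Y, suppose every cluster mass p_πρ^Y(ℓ) = Σ_i Σ_j ρ(i) π_Y^β(j|i) p(ℓ|j,i) is strictly positive. Then ∇F(Y) = 0 holds if and only if for every ℓ = 1, …, K the representative satisfies the weighted-centroid condition y_ℓ = (Σ_{i=1}^N Σ_{j=1}^K ρ(i) p(ℓ|j,i) π_Y^β(j|i) x_i) / (Σ_{i=1}^N Σ_{j=1}^K ρ(i) p(ℓ|j,i) π_Y^β(j|i)). -/

import Mathlib

open InnerProductSpace Real

set_option maxHeartbeats 1000000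


/-- In the autonomy-aware clustering setup with squared Euclidean cost and
autonomy independent of `Y`, if every cluster mass
`p_πρ^Y(ℓ) = ∑ i ∑ j ρ(i) π_Y^β(j|i) p(ℓ|j,i)` is strictly positive, then `∇F(Y) = 0` iff
every representative satisfies the weighted-centroid condition
`y_ℓ = (∑ i ∑ j ρ(i) p(ℓ|j,i) π_Y^β(j|i) x_i) / (∑ i ∑ j ρ(i) p(ℓ|j,i) π_Y^β(j|i))`. -/
theorem stmt_2 (N K d : ℕ) (β : ℝ) (hβ : 0 < β)
    (x : Fin N → EuclideanSpace ℝ (Fin d)) (ρ : Fin N → ℝ)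
    (hρ : ∀ i, 0 ≤ ρ i) (hρ1 : ∑ i, ρ i = 1)
    (p : Fin K → Fin K → Fin N → ℝ)
    (hp : ∀ k j i, 0 ≤ p k j i) (hp1 : ∀ j i, ∑ k, p k j i = 1)
    (davg : (PiLp 2 fun _ : Fin K => EuclideanSpace ℝ (Fin d)) → Fin N → Fin K → ℝ)
    (hdavg : ∀ Y i j, davg Y i j = ∑ k, p k j i * ‖x i - Y k‖ ^ 2)
    (πpol : (PiLp 2 fun _ : Fin K => EuclideanSpace ℝ (Fin d)) → Fin K → Fin N → ℝ)
    (hπ : ∀ Y j i, πpol Y j i =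
      Real.exp (-β * davg Y i j) / ∑ ℓ, Real.exp (-β * davg Y i ℓ))
    (F : (PiLp 2 fun _ : Fin K => EuclideanSpace ℝ (Fin d)) → ℝ)
    (hF : ∀ Y, F Y = -(1 / β) * ∑ i, ρ i * Real.log (∑ j, Real.exp (-β * davg Y i j)))
    (Y : PiLp 2 fun _ : Fin K => EuclideanSpace ℝ (Fin d))
    (hmass : ∀ ℓ, 0 < ∑ i, ∑ j, ρ i * πpol Y j i * p ℓ j i) :
    gradient F Y = 0 ↔
      ∀ ℓ, Y ℓ = (∑ i, ∑ j, ρ i * p ℓ j i * πpol Y j i)⁻¹ •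
        ∑ i, ∑ j, (ρ i * p ℓ j i * πpol Y j i) • x i := by
  rcases Nat.eq_zero_or_pos K with hK | hK
  · subst hK
    haveI : Subsingleton (PiLp 2 fun _ : Fin 0 => EuclideanSpace ℝ (Fin d)) :=
      ⟨fun a b => PiLp.ext fun i => i.elim0⟩
    constructor
    · intro _ ℓ; exact ℓ.elim0
    · intro _; exact Subsingleton.elim _ _
  haveI : NeZero K := ⟨hK.ne'⟩
  have hd : davg = fun Z i j => ∑ k, p k j i * ‖x i - Z k‖ ^ 2 := by
    funext Z i j; exact hdavg Z i j
  subst hd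
  have hFe : F = fun Z => -(1 / β) * ∑ i, ρ i *
      Real.log (∑ j, Real.exp (-β * ∑ k, p k j i * ‖x i - Z k‖ ^ 2)) := by
    funext Z; exact hF Z
  subst hFe
  -- notation
  set P : Fin K → ((PiLp 2 fun _ : Fin K => EuclideanSpace ℝ (Fin d)) →L[ℝ] EuclideanSpace ℝ (Fin d)) :=
    PiLp.proj (𝕜 := ℝ) 2 (fun _ : Fin K => EuclideanSpace ℝ (Fin d)) with hP
  set D : Fin N → Fin K → ℝ := fun i j => ∑ k, p k j i * ‖x i - Y k‖ ^ 2 with hD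
  set e : Fin N → Fin K → ℝ := fun i j => Real.exp (-β * D i j) with he
  set S : Fin N → ℝ := fun i => ∑ j, e i j with hS
  have Spos : ∀ i, 0 < S i := fun i =>
    Finset.sum_pos (fun j _ => Real.exp_pos _) Finset.univ_nonempty
  set A : Fin N → Fin K → ((PiLp 2 fun _ : Fin K => EuclideanSpace ℝ (Fin d)) →L[ℝ] ℝ) := fun i j =>
    ∑ k, p k j i • ((innerSL ℝ ((2 : ℝ) • (Y k - x i))).comp (P k)) with hA
  -- derivative of the squared norm
  have hsq : ∀ (i : Fin N) (k : Fin K),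
      HasFDerivAt (fun Z : (PiLp 2 fun _ : Fin K => EuclideanSpace ℝ (Fin d)) => ‖x i - Z k‖ ^ 2)
        ((innerSL ℝ ((2 : ℝ) • (Y k - x i))).comp (P k)) Y := by
    intro i k
    have h0 : HasFDerivAt (fun Z : (PiLp 2 fun _ : Fin K => EuclideanSpace ℝ (Fin d)) => x i - Z k) (-(P k)) Y := by
      exact ((hasFDerivAt_const (x i) Y).sub ((P k).hasFDerivAt (x := Y))).congr_fderiv (by simp)
    have h1 := h0.inner ℝ h0
    have h2 : (fun Z : (PiLp 2 fun _ : Fin K => EuclideanSpace ℝ (Fin d)) => ‖x i - Z k‖ ^ 2) =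
        fun Z : (PiLp 2 fun _ : Fin K => EuclideanSpace ℝ (Fin d)) => (inner ℝ (x i - Z k) (x i - Z k) : ℝ) := by
      funext Z; rw [real_inner_self_eq_norm_sq]
    rw [h2]
    refine h1.congr_fderiv ?_
    ext V
    simp only [ContinuousLinearMap.coe_comp', Function.comp_apply,
      ContinuousLinearMap.prod_apply, ContinuousLinearMap.neg_apply,
      fderivInnerCLM_apply, innerSL_apply_apply, inner_neg_left, inner_neg_right,
      real_inner_smul_left]
    rw [real_inner_comm ((P k) V) (x i - Y k),
      show Y k - x i = -(x i - Y k) from (neg_sub _ _).symm, inner_neg_left]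
    ring_nf
    rw [real_inner_comm]
  have hAd : ∀ i j, HasFDerivAt (fun Z : (PiLp 2 fun _ : Fin K => EuclideanSpace ℝ (Fin d)) => ∑ k, p k j i * ‖x i - Z k‖ ^ 2) (A i j) Y :=
    fun i j => HasFDerivAt.fun_sum fun k _ => (hsq i k).const_mul (p k j i)
  have hExp : ∀ i j, HasFDerivAt (fun Z : (PiLp 2 fun _ : Fin K => EuclideanSpace ℝ (Fin d)) => Real.exp (-β * ∑ k, p k j i * ‖x i - Z k‖ ^ 2))
      (e i j • ((-β) • A i j)) Y := fun i j => ((hAd i j).const_mul (-β)).exp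
  have hSum : ∀ i, HasFDerivAt
      (fun Z : (PiLp 2 fun _ : Fin K => EuclideanSpace ℝ (Fin d)) => ∑ j, Real.exp (-β * ∑ k, p k j i * ‖x i - Z k‖ ^ 2))
      (∑ j, e i j • ((-β) • A i j)) Y := fun i => HasFDerivAt.fun_sum fun j _ => hExp i j
  have hLog : ∀ i, HasFDerivAt
      (fun Z : (PiLp 2 fun _ : Fin K => EuclideanSpace ℝ (Fin d)) => Real.log (∑ j, Real.exp (-β * ∑ k, p k j i * ‖x i - Z k‖ ^ 2)))
      ((S i)⁻¹ • ∑ j, e i j • ((-β) • A i j)) Y :=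
    fun i => (hSum i).log (Spos i).ne'
  have hFd : HasFDerivAt
      (fun Z : (PiLp 2 fun _ : Fin K => EuclideanSpace ℝ (Fin d)) => -(1 / β) * ∑ i, ρ i *
        Real.log (∑ j, Real.exp (-β * ∑ k, p k j i * ‖x i - Z k‖ ^ 2)))
      ((-(1 / β)) • ∑ i, ρ i • ((S i)⁻¹ • ∑ j, e i j • ((-β) • A i j))) Y :=
    (HasFDerivAt.fun_sum fun i _ => (hLog i).const_mul (ρ i)).const_mul (-(1 / β))
  -- the gradient vector
  set G : PiLp 2 (fun _ : Fin K => EuclideanSpace ℝ (Fin d)) := WithLp.toLp 2 (fun ℓ => ∑ i, ∑ j, (2 * (ρ i * p ℓ j i * πpol Y j i)) • (Y ℓ - x i)) with hG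
  have hGrad : HasGradientAt
      (fun Z : (PiLp 2 fun _ : Fin K => EuclideanSpace ℝ (Fin d)) => -(1 / β) * ∑ i, ρ i *
        Real.log (∑ j, Real.exp (-β * ∑ k, p k j i * ‖x i - Z k‖ ^ 2))) G Y := by
    rw [hasGradientAt_iff_hasFDerivAt]
    refine hFd.congr_fderiv ?_
    ext V
    rw [InnerProductSpace.toDual_apply_apply, PiLp.inner_apply]
    simp only [ContinuousLinearMap.smul_apply, ContinuousLinearMap.sum_apply, smul_eq_mul,
      hA, ContinuousLinearMap.coe_comp', Function.comp_apply, innerSL_apply_apply, PiLp.proj_apply,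
      hG, sum_inner, real_inner_smul_left, hP]
    have hswap : ∀ (f : Fin N → Fin K → Fin K → ℝ),
        (∑ i, ∑ j, ∑ k, f i j k) = ∑ k, ∑ i, ∑ j, f i j k := by
      intro f
      have h1 : ∀ i : Fin N, (∑ j, ∑ k, f i j k) = ∑ k, ∑ j, f i j k :=
        fun i => Finset.sum_comm
      simp_rw [h1]
      exact Finset.sum_comm
    trans (∑ i, ∑ j, ∑ k, 2 * (ρ i * p k j i * πpol Y j i) *
        (inner ℝ (Y k - x i) (V k) : ℝ))
    · simp only [Finset.mul_sum]
      refine Finset.sum_congr rfl fun i _ => Finset.sum_congr rfl fun j _ =>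
        Finset.sum_congr rfl fun k _ => ?_
      have hs : (∑ j', Real.exp (-β * ∑ k', p k' j' i * ‖x i - Y k'‖ ^ 2)) ≠ 0 := by
        simpa [hS, he, hD] using (Spos i).ne'
      simp only [hπ, he, hS, hD]
      have h1 : 1 / β * β = 1 := one_div_mul_cancel hβ.ne'
      linear_combination (ρ i * (∑ j', Real.exp (-β * ∑ k', p k' j' i * ‖x i - Y k'‖ ^ 2))⁻¹ *
        Real.exp (-β * ∑ k', p k' j i * ‖x i - Y k'‖ ^ 2) * p k j i * 2 *
        (inner ℝ (Y k - x i) (V k) : ℝ)) * h1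
    · exact hswap _
  rw [hGrad.gradient]
  -- mass rewritten
  have hm : ∀ ℓ, 0 < ∑ i, ∑ j, ρ i * p ℓ j i * πpol Y j i := by
    intro ℓ
    have h : (∑ i, ∑ j, ρ i * p ℓ j i * πpol Y j i)
        = ∑ i, ∑ j, ρ i * πpol Y j i * p ℓ j i :=
      Finset.sum_congr rfl fun i _ => Finset.sum_congr rfl fun j _ => by ring
    rw [h]; exact hmass ℓ
  have hGl : ∀ ℓ, G ℓ = (2 * ∑ i, ∑ j, ρ i * p ℓ j i * πpol Y j i) • Y ℓ -
      (2 : ℝ) • ∑ i, ∑ j, (ρ i * p ℓ j i * πpol Y j i) • x i := by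
    intro ℓ
    rw [hG]
    show (∑ i, ∑ j, (2 * (ρ i * p ℓ j i * πpol Y j i)) • (Y ℓ - x i)) = _
    simp only [smul_sub, Finset.sum_sub_distrib]
    congr 1
    · simp only [← Finset.sum_smul, ← Finset.mul_sum]
    · simp only [mul_smul, ← Finset.smul_sum]
  constructor
  · intro h ℓ
    have h0 : G ℓ = 0 := by rw [h]; rfl
    rw [hGl ℓ] at h0
    have h1 : ((∑ i, ∑ j, ρ i * p ℓ j i * πpol Y j i)) • Y ℓ
        = ∑ i, ∑ j, (ρ i * p ℓ j i * πpol Y j i) • x i := by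
      have h2 : (2 : ℝ) • ((∑ i, ∑ j, ρ i * p ℓ j i * πpol Y j i) • Y ℓ)
          = (2 : ℝ) • ∑ i, ∑ j, (ρ i * p ℓ j i * πpol Y j i) • x i := by
        rw [smul_smul]
        exact sub_eq_zero.mp h0
      exact smul_right_injective _ (by norm_num : (2:ℝ) ≠ 0) h2
    rw [eq_comm, inv_smul_eq_iff₀ (hm ℓ).ne', eq_comm]
    exact h1
  · intro h
    refine PiLp.ext fun ℓ => ?_
    have h1 := h ℓ
    rw [eq_comm, inv_smul_eq_iff₀ (hm ℓ).ne'] at h1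
    show G ℓ = 0
    rw [hGl ℓ, sub_eq_zero, h1, smul_smul]
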